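/- Let A be an n×n real symmetric matrix with entries satisfying 0 < c ≤ a_{i,j} ≤ b, λ its Perron eigenvalue and x its normalized Perron eigenvector (positive entries, ‖x‖₂ = 1). Then every entry of the rank-one matrix λ·x·xᵀ is at least c³/b². -/
import Mathlib


/-- Every entry of `λ x xᵀ` is at least `c³ / b²`, where `λ` is the Perron
eigenvalue and `x` the normalized Perron eigenvector. -/
theorem perron_rank_one_entry_bound (n : ℕ) (A : Matrix (Fin n) (Fin n) ℝ)
    (c b : ℝ) (hA : A.IsSymm) (hc : 0 < c) (hcb : c ≤ b)
    (hbound : ∀ i j, c ≤ A i j ∧ A i j ≤ b)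
    (x : Fin n → ℝ) (lam : ℝ)
    (hxpos : ∀ i, 0 < x i) (hxnorm : ∑ i, x i ^ 2 = 1)
    (heig : A.mulVec x = lam • x)
    (hmem : lam ∈ spectrum ℝ A) (hmax : ∀ μ ∈ spectrum ℝ A, |μ| ≤ lam) :
    ∀ i j, c ^ 3 / b ^ 2 ≤ lam * x i * x j := by
  intro i j
  have hb : 0 < b := lt_of_lt_of_le hc hcb
  set S := ∑ k, x k with hSdef
  have hSpos : 0 < S := Finset.sum_pos (fun k _ => hxpos k) ⟨i, Finset.mem_univ i⟩
  have heig' : ∀ k, ∑ m, A k m * x m = lam * x k := by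
    intro k
    have := congrFun heig k
    simpa [Matrix.mulVec, dotProduct] using this
  have hlow : ∀ k, c * S ≤ lam * x k := by
    intro k
    rw [← heig' k, hSdef, Finset.mul_sum]
    exact Finset.sum_le_sum fun m _ =>
      mul_le_mul_of_nonneg_right (hbound k m).1 (hxpos m).le
  have hup : ∀ k, lam * x k ≤ b * S := by
    intro k
    rw [← heig' k, hSdef, Finset.mul_sum]
    exact Finset.sum_le_sum fun m _ =>
      mul_le_mul_of_nonneg_right (hbound k m).2 (hxpos m).le
  have hlam : 0 < lam := by
    have h := hlow i
    have hxi := hxpos i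
    nlinarith [mul_pos hc hSpos]
  have hlamub : lam ≤ b * S ^ 2 := by
    have h1 : lam = ∑ k, (lam * x k) * x k := by
      calc lam = lam * ∑ k, x k ^ 2 := by rw [hxnorm]; ring
        _ = ∑ k, (lam * x k) * x k := by
            rw [Finset.mul_sum]; exact Finset.sum_congr rfl fun k _ => by ring
    have h2 : ∑ k, (lam * x k) * x k ≤ ∑ k, (b * S) * x k :=
      Finset.sum_le_sum fun k _ =>
        mul_le_mul_of_nonneg_right (hup k) (hxpos k).le
    have h3 : ∑ k, (b * S) * x k = b * S ^ 2 := by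
      rw [← Finset.mul_sum, ← hSdef]; ring
    linarith [h1 ▸ h2.trans_eq h3]
  have ht : 0 < lam * x i * x j := mul_pos (mul_pos hlam (hxpos i)) (hxpos j)
  have key : (c * S) * (c * S) ≤ (lam * x i) * (lam * x j) :=
    mul_le_mul (hlow i) (hlow j) (by positivity) (mul_pos hlam (hxpos i)).le
  have h4 : c ^ 2 / b ≤ lam * x i * x j := by
    rw [div_le_iff₀ hb]
    have h5 : lam * (lam * x i * x j) ≤ (b * S ^ 2) * (lam * x i * x j) :=
      mul_le_mul_of_nonneg_right hlamub ht.le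
    nlinarith [key, h5, hSpos, sq_nonneg S]
  calc c ^ 3 / b ^ 2 ≤ c ^ 2 / b := by
        rw [div_le_div_iff₀ (by positivity) hb]; nlinarith [mul_pos (mul_pos hc hc) hb]
    _ ≤ lam * x i * x j := h4
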